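/- Let h : ℤ → ℂ with h(0) = 1, satisfying k·(h(j+k) - h(k)) = j·(h(j+k) - h(j)) for all j,k ∈ ℤ. Then, setting b = h(1) - 1, one has h(j) = 1 + b·j for all j ∈ ℤ. -/

import Mathlib

/-- If `h : ℤ → ℂ` with `h 0 = 1` satisfies `k(h(j+k) - h(k)) = j(h(j+k) - h(j))`,
then `h j = 1 + b j` where `b = h 1 - 1`. -/
theorem case_B_h_is_affine (h : ℤ → ℂ) (h0 : h 0 = 1)
    (heq : ∀ j k : ℤ, (k : ℂ) * (h (j + k) - h k) = (j : ℂ) * (h (j + k) - h j)) :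
    ∀ j : ℤ, h j = 1 + (h 1 - 1) * j := by
  have hm1 : h (-1) = 2 - h 1 := by
    have t := heq (-1) 1
    norm_num [h0] at t
    linear_combination -t
  have h2 : h 2 = 2 * h 1 - 1 := by
    have t := heq 2 (-1)
    norm_num [hm1] at t
    linear_combination t / 2
  intro j
  induction j using Int.induction_on with
  | zero => simp [h0]
  | succ n ih =>
    match n, ih with
    | 0, ih => norm_num
    | 1, ih => push_cast; linear_combination h2
    | (m+2), ih =>
      have key := heq 1 ((m : ℤ) + 2)
      have e : (1 : ℤ) + ((m : ℤ) + 2) = (m : ℤ) + 2 + 1 := by ring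
      rw [e] at key
      push_cast at key ih ⊢
      have hne : ((m : ℂ) + 1) ≠ 0 := Nat.cast_add_one_ne_zero m
      apply mul_left_cancel₀ hne
      linear_combination key + ((m : ℂ) + 2) * ih
  | pred n ih =>
    have key := heq (-(n : ℤ) - 1) 1
    have e : (-(n : ℤ) - 1) + 1 = -(n : ℤ) := by ring
    rw [e] at key
    push_cast at key ih ⊢
    have hne : (-(n : ℂ) - 1) ≠ 0 := by
      intro hc
      have : ((n : ℂ) + 1) = 0 := by linear_combination -hc
      exact Nat.cast_add_one_ne_zero n this
    apply mul_left_cancel₀ hne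
    linear_combination key + (-(n : ℂ) - 2) * ih
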